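/- Every snake graph admits at least two perfect matchings consisting entirely of boundary edges, and these are the only perfect matchings consisting entirely of boundary edges. -/

import Mathlib

/-- A position in the integer grid; tiles are unit squares with a given south-west corner. -/
abbrev Pos : Type := ℤ × ℤ

/-- An edge of the grid: a base vertex together with a direction
(`true` = horizontal edge to the east, `false` = vertical edge to the north). -/
abbrev SEdge : Type := Pos × Bool

/-- The two endpoints of an edge. -/
def edgeVerts (e : SEdge) : Finset Pos :=
  {e.1, if e.2 then (e.1.1 + 1, e.1.2) else (e.1.1, e.1.2 + 1)}

/-- The four edges of the unit-square tile whose south-west corner is `p`: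
bottom, left, right and top edges. -/
def tileEdges (p : Pos) : Finset SEdge :=
  {(p, true), (p, false), ((p.1 + 1, p.2), false), ((p.1, p.2 + 1), true)}

/-- The four vertices of the tile with south-west corner `p`. -/
def tileVerts (p : Pos) : Finset Pos := (tileEdges p).biUnion edgeVerts

/-- The list of south-west corners of the tiles of a snake graph built from gluing data `g`
(`true` = the next tile is glued to the right edge, `false` = glued to the top edge),
starting at position `p`. -/
def tilePosFrom : List Bool → Pos → List Pos
  | [], p => [p]
  | b :: g, p => p :: tilePosFrom g (if b then (p.1 + 1, p.2) else (p.1, p.2 + 1))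

/-- The tiles of the snake graph with gluing data `g`; a snake graph with `n + 1` tiles
corresponds to `g` of length `n`. -/
def snakeTiles (g : List Bool) : List Pos := tilePosFrom g (0, 0)

/-- The edge set of the snake graph with gluing data `g`. -/
def snakeEdges (g : List Bool) : Finset SEdge :=
  (snakeTiles g).toFinset.biUnion tileEdges

/-- The vertex set of the snake graph with gluing data `g`. -/
def snakeVerts (g : List Bool) : Finset Pos := (snakeEdges g).biUnion edgeVerts

/-- `P` is a perfect matching of the graph with edge set `E`: a subset of the edges such
that every vertex is incident to exactly one edge of `P`. -/
def IsPM (E P : Finset SEdge) : Prop :=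
  P ⊆ E ∧ ∀ v ∈ E.biUnion edgeVerts, ∃! e, e ∈ P ∧ v ∈ edgeVerts e

/-- The boundary edges of the snake graph: edges lying in exactly one tile. -/
def boundary (g : List Bool) : Finset SEdge :=
  (snakeEdges g).filter
    (fun e => (snakeTiles g).countP (fun p => decide (e ∈ tileEdges p)) = 1)

/-- `P` is the minimal perfect matching of the snake graph with gluing data `g`:
the perfect matching consisting only of boundary edges which contains the bottom
edge of the first tile. -/
def IsMinPM (g : List Bool) (P : Finset SEdge) : Prop :=
  IsPM (snakeEdges g) P ∧ P ⊆ boundary g ∧ (((0 : ℤ), (0 : ℤ)), true) ∈ P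


/-! ### Auxiliary infrastructure -/

namespace SnakeAux

open Finset

def eB (p : Pos) : SEdge := (p, true)
def eL (p : Pos) : SEdge := (p, false)
def eR (p : Pos) : SEdge := ((p.1 + 1, p.2), false)
def eT (p : Pos) : SEdge := ((p.1, p.2 + 1), true)

def stepP (b : Bool) (p : Pos) : Pos := if b then (p.1 + 1, p.2) else (p.1, p.2 + 1)

def glueE (b : Bool) (p : Pos) : SEdge := if b then eR p else eT p

def Eg (g : List Bool) (p : Pos) : Finset SEdge :=
  (tilePosFrom g p).toFinset.biUnion tileEdges

def Vg (g : List Bool) (p : Pos) : Finset Pos := (Eg g p).biUnion edgeVerts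

def Bg (g : List Bool) (p : Pos) : Finset SEdge :=
  (Eg g p).filter
    (fun e => (tilePosFrom g p).countP (fun q => decide (e ∈ tileEdges q)) = 1)

lemma snakeEdges_eq (g : List Bool) : snakeEdges g = Eg g (0, 0) := rfl
lemma boundary_eq (g : List Bool) : boundary g = Bg g (0, 0) := rfl

lemma tilePosFrom_cons (b : Bool) (g : List Bool) (p : Pos) :
    tilePosFrom (b :: g) p = p :: tilePosFrom g (stepP b p) := rfl

lemma mem_tileEdges {e : SEdge} {q : Pos} :
    e ∈ tileEdges q ↔ e = eB q ∨ e = eL q ∨ e = eR q ∨ e = eT q := by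
  simp [tileEdges, eB, eL, eR, eT]

lemma mem_edgeVerts {v : Pos} {e : SEdge} :
    v ∈ edgeVerts e ↔ v = e.1 ∨ v = (if e.2 then (e.1.1 + 1, e.1.2) else (e.1.1, e.1.2 + 1)) := by
  simp [edgeVerts]

lemma cover_cases {v : Pos} {e : SEdge} (h : v ∈ edgeVerts e) :
    e = (v, true) ∨ e = (v, false) ∨ e = ((v.1 - 1, v.2), true) ∨ e = ((v.1, v.2 - 1), false) := by
  obtain ⟨⟨x, y⟩, b⟩ := e
  rcases b <;> rcases mem_edgeVerts.1 h with h | h <;>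
    simp_all [Prod.ext_iff] <;> omega

lemma mem_tp_le {q p : Pos} {g : List Bool} (h : q ∈ tilePosFrom g p) :
    p.1 ≤ q.1 ∧ p.2 ≤ q.2 := by
  induction g generalizing p with
  | nil => simp [tilePosFrom] at h; simp [h]
  | cons b g ih =>
    rw [tilePosFrom_cons] at h
    rcases List.mem_cons.1 h with h | h
    · simp [h]
    · have := ih h
      rcases b <;> simp [stepP] at this <;> omega

lemma mem_Eg {e : SEdge} {g : List Bool} {p : Pos} :
    e ∈ Eg g p ↔ ∃ q ∈ tilePosFrom g p, e ∈ tileEdges q := by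
  simp [Eg]

lemma Eg_cons (b : Bool) (g : List Bool) (p : Pos) :
    Eg (b :: g) p = tileEdges p ∪ Eg g (stepP b p) := by
  simp [Eg, tilePosFrom_cons]

lemma mem_Eg_base {e : SEdge} {g : List Bool} {p : Pos} (h : e ∈ Eg g p) :
    p.1 ≤ e.1.1 ∧ p.2 ≤ e.1.2 := by
  obtain ⟨q, hq, he⟩ := mem_Eg.1 h
  have hle := mem_tp_le hq
  rcases mem_tileEdges.1 he with h | h | h | h <;> subst h <;>
    simp only [eB, eL, eR, eT] <;> omega

lemma tileVerts_eq (p : Pos) :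
    tileVerts p = {p, (p.1 + 1, p.2), (p.1, p.2 + 1), (p.1 + 1, p.2 + 1)} := by
  ext v
  simp only [tileVerts, tileEdges, edgeVerts, Finset.mem_biUnion, Finset.mem_insert,
    Finset.mem_singleton, Prod.ext_iff]
  constructor
  · rintro ⟨⟨⟨x, y⟩, bb⟩, he, hv⟩
    rcases bb <;> simp_all [Prod.ext_iff] <;> omega
  · rintro (h | h | h | h)
    · exact ⟨(p, true), by simp, by simp [Prod.ext_iff]; omega⟩
    · exact ⟨(p, true), by simp, by simp [Prod.ext_iff]; omega⟩
    · exact ⟨(p, false), by simp, by simp [Prod.ext_iff]; omega⟩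
    · exact ⟨((p.1 + 1, p.2), false), by simp, by simp [Prod.ext_iff]; omega⟩

lemma mem_Vg {v : Pos} {g : List Bool} {p : Pos} :
    v ∈ Vg g p ↔ ∃ e ∈ Eg g p, v ∈ edgeVerts e := by
  simp [Vg]

lemma mem_Vg_base {v : Pos} {g : List Bool} {p : Pos} (h : v ∈ Vg g p) :
    p.1 ≤ v.1 ∧ p.2 ≤ v.2 := by
  obtain ⟨e, he, hv⟩ := mem_Vg.1 h
  have hb := mem_Eg_base he
  rcases mem_edgeVerts.1 hv with h | h <;> subst h
  · exact hb
  · rcases e.2 <;> simp <;> omega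

lemma Vg_cons (b : Bool) (g : List Bool) (p : Pos) :
    Vg (b :: g) p = tileVerts p ∪ Vg g (stepP b p) := by
  ext v
  simp only [Vg, tileVerts, Eg_cons, Finset.mem_union, Finset.mem_biUnion]
  constructor
  · rintro ⟨e, (he | he), hv⟩
    exacts [Or.inl ⟨e, he, hv⟩, Or.inr ⟨e, he, hv⟩]
  · rintro (⟨e, he, hv⟩ | ⟨e, he, hv⟩)
    exacts [⟨e, Or.inl he, hv⟩, ⟨e, Or.inr he, hv⟩]


lemma self_mem_tp (g : List Bool) (p : Pos) : p ∈ tilePosFrom g p := by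
  cases g <;> simp [tilePosFrom]

lemma glueE_mem_tile (b : Bool) (p : Pos) : glueE b p ∈ tileEdges p := by
  cases b <;> simp [glueE, mem_tileEdges, eR, eT]

lemma glueE_mem_tile' (b : Bool) (p : Pos) : glueE b p ∈ tileEdges (stepP b p) := by
  cases b <;> simp [glueE, stepP, mem_tileEdges, eB, eL, eR, eT]

lemma shared_edge {b : Bool} {g : List Bool} {p q : Pos} {e : SEdge}
    (he : e ∈ tileEdges p) (hq : q ∈ tilePosFrom g (stepP b p))
    (heq : e ∈ tileEdges q) : e = glueE b p := by
  have hle := mem_tp_le hq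
  rcases mem_tileEdges.1 he with h | h | h | h <;> subst h <;>
    rcases mem_tileEdges.1 heq with h | h | h | h <;>
    rcases b <;>
    simp_all [eB, eL, eR, eT, glueE, stepP, Prod.ext_iff] <;> omega

def cnt (g : List Bool) (p : Pos) (e : SEdge) : ℕ :=
  (tilePosFrom g p).countP (fun q => decide (e ∈ tileEdges q))

lemma mem_Bg {e : SEdge} {g : List Bool} {p : Pos} :
    e ∈ Bg g p ↔ e ∈ Eg g p ∧ cnt g p e = 1 := by
  simp [Bg, cnt]

lemma cnt_cons (b : Bool) (g : List Bool) (p : Pos) (e : SEdge) :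
    cnt (b :: g) p e = (if e ∈ tileEdges p then 1 else 0) + cnt g (stepP b p) e := by
  simp [cnt, tilePosFrom_cons, List.countP_cons]
  by_cases h : e ∈ tileEdges p <;> simp [h] <;> omega

lemma cnt_pos {e : SEdge} {g : List Bool} {p : Pos} (h : e ∈ Eg g p) :
    1 ≤ cnt g p e := by
  obtain ⟨q, hq, he⟩ := mem_Eg.1 h
  have : 0 < cnt g p e := List.countP_pos_iff.2 ⟨q, hq, by simpa using he⟩
  omega

lemma Bg_of_tile {e : SEdge} {b : Bool} {g : List Bool} {p : Pos}
    (h : e ∈ tileEdges p) (hne : e ≠ glueE b p) : e ∈ Bg (b :: g) p := by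
  refine mem_Bg.2 ⟨by rw [Eg_cons]; exact Finset.mem_union_left _ (by simpa using h), ?_⟩
  rw [cnt_cons, if_pos h]
  have : cnt g (stepP b p) e = 0 := by
    refine List.countP_eq_zero.2 ?_
    intro q hq
    simp only [decide_eq_true_eq]
    intro heq
    exact hne (shared_edge h hq heq)
  omega

lemma glue_not_Bg (b : Bool) (g : List Bool) (p : Pos) : glueE b p ∉ Bg (b :: g) p := by
  intro h
  have hc := (mem_Bg.1 h).2
  rw [cnt_cons, if_pos (glueE_mem_tile b p)] at hc
  have h1 : 1 ≤ cnt g (stepP b p) (glueE b p) := by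
    have : 0 < cnt g (stepP b p) (glueE b p) :=
      List.countP_pos_iff.2 ⟨stepP b p, self_mem_tp g (stepP b p),
        by simpa using glueE_mem_tile' b p⟩
    omega
  omega

lemma Bg_sub_iff {e : SEdge} {b : Bool} {g : List Bool} {p : Pos}
    (h : e ∈ Eg g (stepP b p)) :
    e ∈ Bg (b :: g) p ↔ e ∈ Bg g (stepP b p) ∧ e ≠ glueE b p := by
  have hpos := cnt_pos h
  constructor
  · intro hb
    obtain ⟨-, hc⟩ := mem_Bg.1 hb
    rw [cnt_cons] at hc
    have hnt : e ∉ tileEdges p := by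
      intro ht; rw [if_pos ht] at hc; omega
    have hglue : e ≠ glueE b p := by
      intro hg; exact hnt (hg ▸ glueE_mem_tile b p)
    rw [if_neg hnt] at hc
    exact ⟨mem_Bg.2 ⟨h, by omega⟩, hglue⟩
  · rintro ⟨hb, hne⟩
    have hnt : e ∉ tileEdges p := by
      intro ht
      obtain ⟨q, hq, heq⟩ := mem_Eg.1 h
      exact hne (shared_edge ht hq heq)
    refine mem_Bg.2 ⟨by rw [Eg_cons]; exact Finset.mem_union_right _ h, ?_⟩
    rw [cnt_cons, if_neg hnt]
    simpa using (mem_Bg.1 hb).2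

lemma Bg_subset_Eg (g : List Bool) (p : Pos) : Bg g p ⊆ Eg g p :=
  Finset.filter_subset _ _

lemma mem_Bg_cases {e : SEdge} {b : Bool} {g : List Bool} {p : Pos}
    (h : e ∈ Bg (b :: g) p) : e ∈ tileEdges p ∨ e ∈ Eg g (stepP b p) := by
  have := Bg_subset_Eg _ _ h
  rw [Eg_cons] at this
  simpa using this

lemma tileVerts_subset_Vg (g : List Bool) (p : Pos) : tileVerts p ⊆ Vg g p := by
  intro v hv
  obtain ⟨e, he, hve⟩ := Finset.mem_biUnion.1 hv
  exact mem_Vg.2 ⟨e, mem_Eg.2 ⟨p, self_mem_tp g p, he⟩, hve⟩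

lemma glue_verts_tile {b : Bool} {p : Pos} : edgeVerts (glueE b p) ⊆ tileVerts p := by
  intro v hv
  rw [tileVerts_eq]
  rcases b <;> simp [glueE, edgeVerts, eR, eT] at hv <;>
    rcases hv with h | h <;> subst h <;> simp

lemma glue_verts_sub (b : Bool) (g : List Bool) (p : Pos) :
    edgeVerts (glueE b p) ⊆ Vg g (stepP b p) := by
  intro v hv
  apply tileVerts_subset_Vg
  rw [tileVerts_eq]
  rcases b <;> simp [glueE, edgeVerts, eR, eT, stepP] at hv ⊢ <;>
    rcases hv with h | h <;> subst h <;> simp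

lemma tile_inter_sub {b : Bool} {g : List Bool} {p : Pos} {v : Pos}
    (h1 : v ∈ tileVerts p) (h2 : v ∈ Vg g (stepP b p)) :
    v ∈ edgeVerts (glueE b p) := by
  have hb := mem_Vg_base h2
  rw [tileVerts_eq] at h1
  rcases b <;>
    simp [stepP] at hb <;>
    simp [glueE, edgeVerts, eR, eT, Prod.ext_iff] <;>
    simp only [Finset.mem_insert, Finset.mem_singleton, Prod.ext_iff] at h1 <;>
    rcases h1 with h | h | h | h <;> omega

/-! ### Exact covers -/

def Cov (W : Finset Pos) (P : Finset SEdge) : Prop :=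
  (∀ e ∈ P, ∀ v ∈ edgeVerts e, v ∈ W) ∧ ∀ v ∈ W, ∃! e, e ∈ P ∧ v ∈ edgeVerts e

lemma Cov_unique {W P} (hC : Cov W P) {v e f} (hv : v ∈ W) (he : e ∈ P) (hf : f ∈ P)
    (hve : v ∈ edgeVerts e) (hvf : v ∈ edgeVerts f) : e = f := by
  obtain ⟨e', -, hu⟩ := hC.2 v hv
  rw [hu e ⟨he, hve⟩, hu f ⟨hf, hvf⟩]

lemma Cov_union {W1 W2 P1 P2} (hd : ∀ v, v ∈ W1 → v ∈ W2 → False)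
    (h1 : Cov W1 P1) (h2 : Cov W2 P2) : Cov (W1 ∪ W2) (P1 ∪ P2) := by
  constructor
  · intro e he v hv
    rcases Finset.mem_union.1 he with he | he
    · exact Finset.mem_union_left _ (h1.1 e he v hv)
    · exact Finset.mem_union_right _ (h2.1 e he v hv)
  · intro v hv
    rcases Finset.mem_union.1 hv with hv | hv
    · obtain ⟨e, ⟨heP, hev⟩, hu⟩ := h1.2 v hv
      refine ⟨e, ⟨Finset.mem_union_left _ heP, hev⟩, ?_⟩
      rintro f ⟨hfP, hfv⟩
      rcases Finset.mem_union.1 hfP with hfP | hfP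
      · exact hu f ⟨hfP, hfv⟩
      · exact absurd (h2.1 f hfP v hfv) (fun h => hd v hv h)
    · obtain ⟨e, ⟨heP, hev⟩, hu⟩ := h2.2 v hv
      refine ⟨e, ⟨Finset.mem_union_right _ heP, hev⟩, ?_⟩
      rintro f ⟨hfP, hfv⟩
      rcases Finset.mem_union.1 hfP with hfP | hfP
      · exact absurd (h1.1 f hfP v hfv) (fun h => hd v h hv)
      · exact hu f ⟨hfP, hfv⟩

lemma Cov_single (e : SEdge) : Cov (edgeVerts e) {e} := by
  constructor
  · intro f hf v hv
    rw [Finset.mem_singleton] at hf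
    subst hf; exact hv
  · intro v hv
    exact ⟨e, ⟨Finset.mem_singleton_self e, hv⟩, by rintro f ⟨hf, -⟩; simpa using hf⟩

lemma Cov_pair {e f : SEdge} (hd : ∀ v, v ∈ edgeVerts e → v ∈ edgeVerts f → False) :
    Cov (edgeVerts e ∪ edgeVerts f) {e, f} := by
  have : ({e, f} : Finset SEdge) = {e} ∪ {f} := rfl
  rw [this]
  exact Cov_union hd (Cov_single e) (Cov_single f)

lemma Cov_sdiff {W W0 : Finset Pos} {P P0 : Finset SEdge}
    (hC : Cov W P) (hsub : P0 ⊆ P) (h0 : Cov W0 P0) (hW : W0 ⊆ W) :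
    Cov (W \ W0) (P \ P0) := by
  constructor
  · intro e he v hv
    obtain ⟨heP, heP0⟩ := Finset.mem_sdiff.1 he
    refine Finset.mem_sdiff.2 ⟨hC.1 e heP v hv, ?_⟩
    intro hvW0
    obtain ⟨f, ⟨hfP0, hfv⟩, -⟩ := h0.2 v hvW0
    refine heP0 ?_
    rw [Cov_unique hC (hC.1 e heP v hv) heP (hsub hfP0) hv hfv]
    exact hfP0
  · intro v hv
    obtain ⟨hvW, hvW0⟩ := Finset.mem_sdiff.1 hv
    obtain ⟨e, ⟨heP, hev⟩, hu⟩ := hC.2 v hvW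
    have heP0 : e ∉ P0 := fun h => hvW0 (h0.1 e h v hev)
    refine ⟨e, ⟨Finset.mem_sdiff.2 ⟨heP, heP0⟩, hev⟩, ?_⟩
    rintro f ⟨hfP, hfv⟩
    exact hu f ⟨(Finset.mem_sdiff.1 hfP).1, hfv⟩



/-! ### The two canonical boundary matchings, with entry states -/

mutual
/-- Boundary matching for an "open" entry state: `s = true` means the left edge of the
first tile is forbidden (so the bottom edge is used), `s = false` the other way round. -/
def mO : List Bool → Pos → Bool → Finset SEdge
  | [], p, true => {eB p, eT p}
  | [], p, false => {eL p, eR p}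
  | true :: g, p, true => {eB p, eT p} ∪ mC g (stepP true p) true
  | false :: g, p, true => {eB p} ∪ mO g (stepP false p) false
  | true :: g, p, false => {eL p} ∪ mO g (stepP true p) true
  | false :: g, p, false => {eL p, eR p} ∪ mC g (stepP false p) false

/-- Boundary matching for a "covered" entry state: `s = true` means the two left
vertices of the first tile are already covered, `s = false` the two bottom ones. -/
def mC : List Bool → Pos → Bool → Finset SEdge
  | [], p, true => {eR p}
  | [], p, false => {eT p}
  | true :: g, p, true => mO g (stepP true p) true
  | false :: g, p, true => {eR p} ∪ mC g (stepP false p) false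
  | true :: g, p, false => {eT p} ∪ mC g (stepP true p) true
  | false :: g, p, false => mO g (stepP false p) false
end

def exO (s : Bool) (p : Pos) : SEdge := if s then eL p else eB p

def XC (s : Bool) (p : Pos) : Finset Pos :=
  if s then {p, (p.1, p.2 + 1)} else {p, (p.1 + 1, p.2)}

def ProbO (g : List Bool) (p : Pos) (s : Bool) (P : Finset SEdge) : Prop :=
  P ⊆ Bg g p ∧ exO s p ∉ P ∧ Cov (Vg g p) P

def ProbC (g : List Bool) (p : Pos) (s : Bool) (P : Finset SEdge) : Prop :=
  P ⊆ Bg g p ∧ Cov (Vg g p \ XC s p) P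

lemma exO_glue (b : Bool) (p : Pos) : exO b (stepP b p) = glueE b p := by
  cases b <;> rfl

lemma XC_glue (b : Bool) (p : Pos) : XC b (stepP b p) = edgeVerts (glueE b p) := by
  cases b <;> simp [XC, stepP, glueE, eR, eT, edgeVerts]

lemma XC_base (s : Bool) (p : Pos) : p ∈ XC s p := by cases s <;> simp [XC]

lemma base_mem_edgeVerts (e : SEdge) : e.1 ∈ edgeVerts e := by simp [edgeVerts]

lemma glue_base (b : Bool) (p : Pos) : (glueE b p).1 = stepP b p := by cases b <;> rfl

lemma not_mem_of_vert {W : Finset Pos} {P : Finset SEdge} (hC : Cov W P) {e : SEdge}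
    {v : Pos} (hv : v ∈ edgeVerts e) (hvW : v ∉ W) : e ∉ P :=
  fun h => hvW (hC.1 e h v hv)

lemma not_in_Eg_cons {e : SEdge} {b : Bool} {g : List Bool} {p : Pos}
    (h1 : e ∉ tileEdges p)
    (h2 : e.1.1 < (stepP b p).1 ∨ e.1.2 < (stepP b p).2) : e ∉ Eg (b :: g) p := by
  rw [Eg_cons]
  intro h
  rcases Finset.mem_union.1 h with h | h
  · exact h1 h
  · have := mem_Eg_base h; omega

lemma upfalse_not_tile (p : Pos) : ((p.1, p.2 + 1), false) ∉ tileEdges p := by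
  simp [mem_tileEdges, eB, eL, eR, eT, Prod.ext_iff]

lemma rttrue_not_tile (p : Pos) : ((p.1 + 1, p.2), true) ∉ tileEdges p := by
  simp [mem_tileEdges, eB, eL, eR, eT, Prod.ext_iff]

lemma upfalse_not_Eg_true {g : List Bool} {p : Pos} :
    ((p.1, p.2 + 1), false) ∉ Eg (true :: g) p :=
  not_in_Eg_cons (upfalse_not_tile p) (by left; simp [stepP])

lemma rttrue_not_Eg_false {g : List Bool} {p : Pos} :
    ((p.1 + 1, p.2), true) ∉ Eg (false :: g) p :=
  not_in_Eg_cons (rttrue_not_tile p) (by right; simp [stepP])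

lemma Eg_nil (p : Pos) : Eg [] p = tileEdges p := by
  simp [Eg, tilePosFrom]

lemma upfalse_not_Eg_nil {p : Pos} : ((p.1, p.2 + 1), false) ∉ Eg [] p := by
  rw [Eg_nil]; exact upfalse_not_tile p

lemma rttrue_not_Eg_nil {p : Pos} : ((p.1 + 1, p.2), true) ∉ Eg [] p := by
  rw [Eg_nil]; exact rttrue_not_tile p

lemma Bg_nil (p : Pos) : Bg [] p = tileEdges p := by
  ext e
  simp only [Bg, Finset.mem_filter, Eg_nil, cnt]
  constructor
  · exact fun h => h.1
  · intro h
    refine ⟨h, ?_⟩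
    simp [tilePosFrom, List.countP_cons, h]

lemma Vg_nil (p : Pos) : Vg [] p = tileVerts p := by
  simp [Vg, Eg_nil, tileVerts]

/-! ### Forcing lemmas -/

lemma forced {W : Finset Pos} {P : Finset SEdge} (hC : Cov W P) {v : Pos} (hv : v ∈ W)
    {e0 : SEdge} (h : ∀ e ∈ P, v ∈ edgeVerts e → e = e0) : e0 ∈ P := by
  obtain ⟨e, ⟨heP, hev⟩, -⟩ := hC.2 v hv
  exact h e heP hev ▸ heP

lemma forced_eB {g : List Bool} {p : Pos} {W : Finset Pos} {P : Finset SEdge}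
    (hC : Cov W P) (hE : P ⊆ Eg g p) (hp : p ∈ W) (hL : eL p ∉ P) : eB p ∈ P := by
  refine forced hC hp ?_
  rintro ⟨⟨x, y⟩, bb⟩ heP hev
  have hbase := mem_Eg_base (hE heP)
  simp only at hbase
  rcases bb
  · exfalso
    have hx : x = p.1 ∧ y = p.2 := by
      rcases mem_edgeVerts.1 hev with h | h <;> simp_all [Prod.ext_iff] <;> omega
    have : ((x, y), false) = eL p := by simp [eL, Prod.ext_iff]; omega
    rw [this] at heP
    exact hL heP
  · have hx : x = p.1 ∧ y = p.2 := by
      rcases mem_edgeVerts.1 hev with h | h <;> simp_all [Prod.ext_iff] <;> omega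
    simp [eB, Prod.ext_iff]; omega

lemma forced_eL {g : List Bool} {p : Pos} {W : Finset Pos} {P : Finset SEdge}
    (hC : Cov W P) (hE : P ⊆ Eg g p) (hp : p ∈ W) (hB : eB p ∉ P) : eL p ∈ P := by
  refine forced hC hp ?_
  rintro ⟨⟨x, y⟩, bb⟩ heP hev
  have hbase := mem_Eg_base (hE heP)
  simp only at hbase
  rcases bb
  · have hx : x = p.1 ∧ y = p.2 := by
      rcases mem_edgeVerts.1 hev with h | h <;> simp_all [Prod.ext_iff] <;> omega
    simp [eL, Prod.ext_iff]; omega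
  · exfalso
    have hx : x = p.1 ∧ y = p.2 := by
      rcases mem_edgeVerts.1 hev with h | h <;> simp_all [Prod.ext_iff] <;> omega
    have : ((x, y), true) = eB p := by simp [eB, Prod.ext_iff]; omega
    rw [this] at heP
    exact hB heP

lemma forced_eT {g : List Bool} {p : Pos} {W : Finset Pos} {P : Finset SEdge}
    (hC : Cov W P) (hE : P ⊆ Eg g p) (hp : (p.1, p.2 + 1) ∈ W) (hL : eL p ∉ P)
    (hno : ((p.1, p.2 + 1), false) ∉ Eg g p) : eT p ∈ P := by
  refine forced hC hp ?_
  rintro ⟨⟨x, y⟩, bb⟩ heP hev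
  have hbase := mem_Eg_base (hE heP)
  simp only at hbase
  rcases bb
  · exfalso
    have hx : x = p.1 ∧ (y = p.2 + 1 ∨ y = p.2) := by
      rcases mem_edgeVerts.1 hev with h | h <;> simp_all [Prod.ext_iff] <;> omega
    rcases hx.2 with hy | hy
    · have : ((x, y), false) = ((p.1, p.2 + 1), false) := by
        simp [Prod.ext_iff]; omega
      rw [this] at heP
      exact hno (hE heP)
    · have : ((x, y), false) = eL p := by simp [eL, Prod.ext_iff]; omega
      rw [this] at heP
      exact hL heP
  · have hx : x = p.1 ∧ y = p.2 + 1 := by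
      rcases mem_edgeVerts.1 hev with h | h <;> simp_all [Prod.ext_iff] <;> omega
    simp [eT, Prod.ext_iff]; omega

lemma forced_eR {g : List Bool} {p : Pos} {W : Finset Pos} {P : Finset SEdge}
    (hC : Cov W P) (hE : P ⊆ Eg g p) (hp : (p.1 + 1, p.2) ∈ W) (hB : eB p ∉ P)
    (hno : ((p.1 + 1, p.2), true) ∉ Eg g p) : eR p ∈ P := by
  refine forced hC hp ?_
  rintro ⟨⟨x, y⟩, bb⟩ heP hev
  have hbase := mem_Eg_base (hE heP)
  simp only at hbase
  rcases bb
  · have hx : x = p.1 + 1 ∧ y = p.2 := by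
      rcases mem_edgeVerts.1 hev with h | h <;> simp_all [Prod.ext_iff] <;> omega
    simp [eR, Prod.ext_iff]; omega
  · exfalso
    have hx : (x = p.1 + 1 ∨ x = p.1) ∧ y = p.2 := by
      rcases mem_edgeVerts.1 hev with h | h <;> simp_all [Prod.ext_iff] <;> omega
    rcases hx.1 with hy | hy
    · have : ((x, y), true) = ((p.1 + 1, p.2), true) := by
        simp [Prod.ext_iff]; omega
      rw [this] at heP
      exact hno (hE heP)
    · have : ((x, y), true) = eB p := by simp [eB, Prod.ext_iff]; omega
      rw [this] at heP
      exact hB heP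

/-! ### Gluing and splitting -/

lemma glue_step {b : Bool} {g : List Bool} {p : Pos} {P0 P1 : Finset SEdge}
    {W0 Wsub : Finset Pos}
    (hP0 : ∀ e ∈ P0, e ∈ tileEdges p ∧ e ≠ glueE b p)
    (hCov0 : Cov W0 P0)
    (h1b : P1 ⊆ Bg g (stepP b p)) (h1g : glueE b p ∉ P1) (h1c : Cov Wsub P1)
    (hdisj : ∀ v ∈ W0, v ∉ Wsub) :
    P0 ∪ P1 ⊆ Bg (b :: g) p ∧ Cov (W0 ∪ Wsub) (P0 ∪ P1) := by
  constructor
  · intro e he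
    rcases Finset.mem_union.1 he with he | he
    · exact Bg_of_tile (hP0 e he).1 (hP0 e he).2
    · have hE : e ∈ Eg g (stepP b p) := Bg_subset_Eg _ _ (h1b he)
      exact (Bg_sub_iff hE).2 ⟨h1b he, fun h => h1g (h ▸ he)⟩
  · exact Cov_union hdisj hCov0 h1c

lemma split_step {b : Bool} {g : List Bool} {p : Pos} {P P0 : Finset SEdge}
    {W W0 : Finset Pos}
    (hPb : P ⊆ Bg (b :: g) p) (hCov : Cov W P)
    (hP0 : P0 ⊆ P) (hCov0 : Cov W0 P0) (hW0 : W0 ⊆ W)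
    (htile : ∀ e ∈ P, e ∈ tileEdges p → e ∈ P0) :
    (P \ P0) ⊆ Bg g (stepP b p) ∧ glueE b p ∉ (P \ P0) ∧
      Cov (W \ W0) (P \ P0) ∧ P = P0 ∪ (P \ P0) := by
  have hglue : glueE b p ∉ P := fun h => glue_not_Bg b g p (hPb h)
  refine ⟨?_, fun h => hglue (Finset.mem_sdiff.1 h).1, Cov_sdiff hCov hP0 hCov0 hW0, ?_⟩
  · intro e he
    obtain ⟨heP, heP0⟩ := Finset.mem_sdiff.1 he
    have hb := hPb heP
    rcases mem_Bg_cases hb with ht | ht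
    · exact absurd (htile e heP ht) heP0
    · exact ((Bg_sub_iff ht).1 hb).1
  · exact (Finset.union_sdiff_of_subset hP0).symm

lemma edgeVerts_eB (p : Pos) : edgeVerts (eB p) = {p, (p.1 + 1, p.2)} := by
  simp [eB, edgeVerts]

lemma edgeVerts_eL (p : Pos) : edgeVerts (eL p) = {p, (p.1, p.2 + 1)} := by
  simp [eL, edgeVerts]

lemma edgeVerts_eR (p : Pos) : edgeVerts (eR p) = {(p.1 + 1, p.2), (p.1 + 1, p.2 + 1)} := by
  simp [eR, edgeVerts]

lemma edgeVerts_eT (p : Pos) : edgeVerts (eT p) = {(p.1, p.2 + 1), (p.1 + 1, p.2 + 1)} := by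
  simp [eT, edgeVerts]



/-! ### Vertex set identities -/

lemma mem_Vg_of_tile {v : Pos} {g : List Bool} {p : Pos} (h : v ∈ tileVerts p) :
    v ∈ Vg g p := tileVerts_subset_Vg g p h

lemma mem_Vg_stepT {g : List Bool} {p : Pos} {x y : ℤ}
    (h : (x = p.1 + 1 ∧ y = p.2) ∨ (x = p.1 + 1 ∧ y = p.2 + 1)) :
    (x, y) ∈ Vg g (stepP true p) := by
  apply mem_Vg_of_tile
  rw [tileVerts_eq]
  simp [stepP, Prod.ext_iff]
  omega

lemma mem_Vg_stepF {g : List Bool} {p : Pos} {x y : ℤ}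
    (h : (x = p.1 ∧ y = p.2 + 1) ∨ (x = p.1 + 1 ∧ y = p.2 + 1)) :
    (x, y) ∈ Vg g (stepP false p) := by
  apply mem_Vg_of_tile
  rw [tileVerts_eq]
  simp [stepP, Prod.ext_iff]
  omega

lemma base_stepT {g : List Bool} {p : Pos} {x y : ℤ} (h : (x, y) ∈ Vg g (stepP true p)) :
    p.1 + 1 ≤ x ∧ p.2 ≤ y := by
  have := mem_Vg_base h
  simpa [stepP] using this

lemma base_stepF {g : List Bool} {p : Pos} {x y : ℤ} (h : (x, y) ∈ Vg g (stepP false p)) :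
    p.1 ≤ x ∧ p.2 + 1 ≤ y := by
  have := mem_Vg_base h
  simpa [stepP] using this

lemma id1 (b : Bool) (g : List Bool) (p : Pos) :
    tileVerts p ∪ (Vg g (stepP b p) \ XC b (stepP b p)) = Vg (b :: g) p := by
  rw [XC_glue]
  ext v
  simp only [Finset.mem_union, Finset.mem_sdiff, Vg_cons]
  constructor
  · rintro (h | ⟨h, -⟩)
    exacts [Or.inl h, Or.inr h]
  · rintro (h | h)
    · exact Or.inl h
    · by_cases hx : v ∈ edgeVerts (glueE b p)
      · exact Or.inl (glue_verts_tile hx)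
      · exact Or.inr ⟨h, hx⟩

lemma id1' (b : Bool) (g : List Bool) (p : Pos) :
    Vg (b :: g) p \ tileVerts p = Vg g (stepP b p) \ XC b (stepP b p) := by
  rw [XC_glue]
  ext v
  simp only [Finset.mem_sdiff, Vg_cons, Finset.mem_union]
  constructor
  · rintro ⟨h | h, hn⟩
    · exact absurd h hn
    · exact ⟨h, fun hx => hn (glue_verts_tile hx)⟩
  · rintro ⟨h, hn⟩
    exact ⟨Or.inr h, fun ht => hn (tile_inter_sub ht h)⟩

lemma id2 (g : List Bool) (p : Pos) :
    ({p, (p.1 + 1, p.2)} : Finset Pos) ∪ Vg g (stepP false p) = Vg (false :: g) p := by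
  ext ⟨x, y⟩
  simp only [Finset.mem_union, Finset.mem_sdiff, Finset.mem_insert, Finset.mem_singleton,
    Vg_cons, tileVerts_eq, Prod.ext_iff]
  by_cases hA : (x, y) ∈ Vg g (stepP false p)
  · have hb := base_stepF hA
    simp only [hA, or_true, true_or, iff_true, true_iff, and_true, true_and, not_true,
      or_false, false_or, and_false, false_and, iff_false, false_iff]
    try omega
  · have h1 : ¬(x = p.1 ∧ y = p.2 + 1) := fun h => hA (mem_Vg_stepF (Or.inl h))
    have h2 : ¬(x = p.1 + 1 ∧ y = p.2 + 1) := fun h => hA (mem_Vg_stepF (Or.inr h))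
    simp only [hA, or_true, true_or, iff_true, true_iff, and_true, true_and, not_true,
      or_false, false_or, and_false, false_and, iff_false, false_iff]
    try omega

lemma id2' (g : List Bool) (p : Pos) :
    Vg (false :: g) p \ ({p, (p.1 + 1, p.2)} : Finset Pos) = Vg g (stepP false p) := by
  ext ⟨x, y⟩
  simp only [Finset.mem_union, Finset.mem_sdiff, Finset.mem_insert, Finset.mem_singleton,
    Vg_cons, tileVerts_eq, Prod.ext_iff]
  by_cases hA : (x, y) ∈ Vg g (stepP false p)
  · have hb := base_stepF hA
    simp only [hA, or_true, true_or, iff_true, true_iff, and_true, true_and, not_true,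
      or_false, false_or, and_false, false_and, iff_false, false_iff]
    try omega
  · have h1 : ¬(x = p.1 ∧ y = p.2 + 1) := fun h => hA (mem_Vg_stepF (Or.inl h))
    have h2 : ¬(x = p.1 + 1 ∧ y = p.2 + 1) := fun h => hA (mem_Vg_stepF (Or.inr h))
    simp only [hA, or_true, true_or, iff_true, true_iff, and_true, true_and, not_true,
      or_false, false_or, and_false, false_and, iff_false, false_iff]
    try omega

lemma id3 (g : List Bool) (p : Pos) :
    ({p, (p.1, p.2 + 1)} : Finset Pos) ∪ Vg g (stepP true p) = Vg (true :: g) p := by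
  ext ⟨x, y⟩
  simp only [Finset.mem_union, Finset.mem_sdiff, Finset.mem_insert, Finset.mem_singleton,
    Vg_cons, tileVerts_eq, Prod.ext_iff]
  by_cases hA : (x, y) ∈ Vg g (stepP true p)
  · have hb := base_stepT hA
    simp only [hA, or_true, true_or, iff_true, true_iff, and_true, true_and, not_true,
      or_false, false_or, and_false, false_and, iff_false, false_iff]
    try omega
  · have h1 : ¬(x = p.1 + 1 ∧ y = p.2) := fun h => hA (mem_Vg_stepT (Or.inl h))
    have h2 : ¬(x = p.1 + 1 ∧ y = p.2 + 1) := fun h => hA (mem_Vg_stepT (Or.inr h))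
    simp only [hA, or_true, true_or, iff_true, true_iff, and_true, true_and, not_true,
      or_false, false_or, and_false, false_and, iff_false, false_iff]
    try omega

lemma id3' (g : List Bool) (p : Pos) :
    Vg (true :: g) p \ ({p, (p.1, p.2 + 1)} : Finset Pos) = Vg g (stepP true p) := by
  ext ⟨x, y⟩
  simp only [Finset.mem_union, Finset.mem_sdiff, Finset.mem_insert, Finset.mem_singleton,
    Vg_cons, tileVerts_eq, Prod.ext_iff]
  by_cases hA : (x, y) ∈ Vg g (stepP true p)
  · have hb := base_stepT hA
    simp only [hA, or_true, true_or, iff_true, true_iff, and_true, true_and, not_true,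
      or_false, false_or, and_false, false_and, iff_false, false_iff]
    try omega
  · have h1 : ¬(x = p.1 + 1 ∧ y = p.2) := fun h => hA (mem_Vg_stepT (Or.inl h))
    have h2 : ¬(x = p.1 + 1 ∧ y = p.2 + 1) := fun h => hA (mem_Vg_stepT (Or.inr h))
    simp only [hA, or_true, true_or, iff_true, true_iff, and_true, true_and, not_true,
      or_false, false_or, and_false, false_and, iff_false, false_iff]
    try omega

lemma id6 (g : List Bool) (p : Pos) :
    Vg (false :: g) p \ ({p, (p.1, p.2 + 1)} : Finset Pos) =
      ({(p.1 + 1, p.2), (p.1 + 1, p.2 + 1)} : Finset Pos) ∪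
        (Vg g (stepP false p) \ ({(p.1, p.2 + 1), (p.1 + 1, p.2 + 1)} : Finset Pos)) := by
  ext ⟨x, y⟩
  simp only [Finset.mem_union, Finset.mem_sdiff, Finset.mem_insert, Finset.mem_singleton,
    Vg_cons, tileVerts_eq, Prod.ext_iff]
  by_cases hA : (x, y) ∈ Vg g (stepP false p)
  · have hb := base_stepF hA
    simp only [hA, or_true, true_or, iff_true, true_iff, and_true, true_and, not_true,
      or_false, false_or, and_false, false_and, iff_false, false_iff]
    try omega
  · have h1 : ¬(x = p.1 ∧ y = p.2 + 1) := fun h => hA (mem_Vg_stepF (Or.inl h))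
    have h2 : ¬(x = p.1 + 1 ∧ y = p.2 + 1) := fun h => hA (mem_Vg_stepF (Or.inr h))
    simp only [hA, or_true, true_or, iff_true, true_iff, and_true, true_and, not_true,
      or_false, false_or, and_false, false_and, iff_false, false_iff]
    try omega

lemma id6' (g : List Bool) (p : Pos) :
    (Vg (false :: g) p \ ({p, (p.1, p.2 + 1)} : Finset Pos)) \
        ({(p.1 + 1, p.2), (p.1 + 1, p.2 + 1)} : Finset Pos) =
      Vg g (stepP false p) \ ({(p.1, p.2 + 1), (p.1 + 1, p.2 + 1)} : Finset Pos) := by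
  ext ⟨x, y⟩
  simp only [Finset.mem_union, Finset.mem_sdiff, Finset.mem_insert, Finset.mem_singleton,
    Vg_cons, tileVerts_eq, Prod.ext_iff]
  by_cases hA : (x, y) ∈ Vg g (stepP false p)
  · have hb := base_stepF hA
    simp only [hA, or_true, true_or, iff_true, true_iff, and_true, true_and, not_true,
      or_false, false_or, and_false, false_and, iff_false, false_iff]
    try omega
  · have h1 : ¬(x = p.1 ∧ y = p.2 + 1) := fun h => hA (mem_Vg_stepF (Or.inl h))
    have h2 : ¬(x = p.1 + 1 ∧ y = p.2 + 1) := fun h => hA (mem_Vg_stepF (Or.inr h))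
    simp only [hA, or_true, true_or, iff_true, true_iff, and_true, true_and, not_true,
      or_false, false_or, and_false, false_and, iff_false, false_iff]
    try omega

lemma id7 (g : List Bool) (p : Pos) :
    Vg (true :: g) p \ ({p, (p.1 + 1, p.2)} : Finset Pos) =
      ({(p.1, p.2 + 1), (p.1 + 1, p.2 + 1)} : Finset Pos) ∪
        (Vg g (stepP true p) \ ({(p.1 + 1, p.2), (p.1 + 1, p.2 + 1)} : Finset Pos)) := by
  ext ⟨x, y⟩
  simp only [Finset.mem_union, Finset.mem_sdiff, Finset.mem_insert, Finset.mem_singleton,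
    Vg_cons, tileVerts_eq, Prod.ext_iff]
  by_cases hA : (x, y) ∈ Vg g (stepP true p)
  · have hb := base_stepT hA
    simp only [hA, or_true, true_or, iff_true, true_iff, and_true, true_and, not_true,
      or_false, false_or, and_false, false_and, iff_false, false_iff]
    try omega
  · have h1 : ¬(x = p.1 + 1 ∧ y = p.2) := fun h => hA (mem_Vg_stepT (Or.inl h))
    have h2 : ¬(x = p.1 + 1 ∧ y = p.2 + 1) := fun h => hA (mem_Vg_stepT (Or.inr h))
    simp only [hA, or_true, true_or, iff_true, true_iff, and_true, true_and, not_true,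
      or_false, false_or, and_false, false_and, iff_false, false_iff]
    try omega

lemma id7' (g : List Bool) (p : Pos) :
    (Vg (true :: g) p \ ({p, (p.1 + 1, p.2)} : Finset Pos)) \
        ({(p.1, p.2 + 1), (p.1 + 1, p.2 + 1)} : Finset Pos) =
      Vg g (stepP true p) \ ({(p.1 + 1, p.2), (p.1 + 1, p.2 + 1)} : Finset Pos) := by
  ext ⟨x, y⟩
  simp only [Finset.mem_union, Finset.mem_sdiff, Finset.mem_insert, Finset.mem_singleton,
    Vg_cons, tileVerts_eq, Prod.ext_iff]
  by_cases hA : (x, y) ∈ Vg g (stepP true p)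
  · have hb := base_stepT hA
    simp only [hA, or_true, true_or, iff_true, true_iff, and_true, true_and, not_true,
      or_false, false_or, and_false, false_and, iff_false, false_iff]
    try omega
  · have h1 : ¬(x = p.1 + 1 ∧ y = p.2) := fun h => hA (mem_Vg_stepT (Or.inl h))
    have h2 : ¬(x = p.1 + 1 ∧ y = p.2 + 1) := fun h => hA (mem_Vg_stepT (Or.inr h))
    simp only [hA, or_true, true_or, iff_true, true_iff, and_true, true_and, not_true,
      or_false, false_or, and_false, false_and, iff_false, false_iff]
    try omega


/-! ### Small helpers for the main induction -/

lemma eX_tile {p : Pos} {e : SEdge} (he : e ∈ tileEdges p) : edgeVerts e ⊆ tileVerts p :=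
  fun v hv => Finset.mem_biUnion.2 ⟨e, he, hv⟩

lemma eB_mem_tile (p : Pos) : eB p ∈ tileEdges p := mem_tileEdges.2 (Or.inl rfl)
lemma eL_mem_tile (p : Pos) : eL p ∈ tileEdges p := mem_tileEdges.2 (Or.inr (Or.inl rfl))
lemma eR_mem_tile (p : Pos) : eR p ∈ tileEdges p := mem_tileEdges.2 (Or.inr (Or.inr (Or.inl rfl)))
lemma eT_mem_tile (p : Pos) : eT p ∈ tileEdges p := mem_tileEdges.2 (Or.inr (Or.inr (Or.inr rfl)))

lemma eBT_union (p : Pos) : edgeVerts (eB p) ∪ edgeVerts (eT p) = tileVerts p := by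
  rw [edgeVerts_eB, edgeVerts_eT, tileVerts_eq]
  ext ⟨x, y⟩
  simp only [Finset.mem_union, Finset.mem_insert, Finset.mem_singleton, Prod.ext_iff]
  omega

lemma eLR_union (p : Pos) : edgeVerts (eL p) ∪ edgeVerts (eR p) = tileVerts p := by
  rw [edgeVerts_eL, edgeVerts_eR, tileVerts_eq]
  ext ⟨x, y⟩
  simp only [Finset.mem_union, Finset.mem_insert, Finset.mem_singleton, Prod.ext_iff]
  omega

lemma disj_tile {b : Bool} {g : List Bool} {p : Pos} {v : Pos} (hv : v ∈ tileVerts p) :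
    v ∉ Vg g (stepP b p) \ XC b (stepP b p) := by
  rw [XC_glue]
  rintro h
  obtain ⟨h1, h2⟩ := Finset.mem_sdiff.1 h
  exact h2 (tile_inter_sub hv h1)

lemma lowx_not_VgT {g : List Bool} {p v : Pos} (h : v.1 = p.1) :
    v ∉ Vg g (stepP true p) := by
  intro hv
  have := mem_Vg_base hv
  simp [stepP] at this
  omega

lemma lowy_not_VgF {g : List Bool} {p v : Pos} (h : v.2 = p.2) :
    v ∉ Vg g (stepP false p) := by
  intro hv
  have := mem_Vg_base hv
  simp [stepP] at this
  omega

lemma XC_t (p : Pos) : XC true p = {p, (p.1, p.2 + 1)} := rfl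
lemma XC_f (p : Pos) : XC false p = {p, (p.1 + 1, p.2)} := rfl

lemma XC_glue_t (p : Pos) : XC true (stepP true p) =
    ({(p.1 + 1, p.2), (p.1 + 1, p.2 + 1)} : Finset Pos) := by
  rw [XC_glue, glueE]
  simp [eR, edgeVerts]

lemma XC_glue_f (p : Pos) : XC false (stepP false p) =
    ({(p.1, p.2 + 1), (p.1 + 1, p.2 + 1)} : Finset Pos) := by
  rw [XC_glue, glueE]
  simp [eT, edgeVerts]

lemma glue_not_in_subC {b : Bool} {g : List Bool} {p : Pos} {Q : Finset SEdge}
    (hcov : Cov (Vg g (stepP b p) \ XC b (stepP b p)) Q) : glueE b p ∉ Q :=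
  not_mem_of_vert hcov (v := stepP b p)
    (by rw [← glue_base b p]; exact base_mem_edgeVerts _)
    (fun h => (Finset.mem_sdiff.1 h).2 (XC_base b (stepP b p)))

lemma glue_not_in_subO {b : Bool} {p : Pos} {Q : Finset SEdge}
    (hex : exO b (stepP b p) ∉ Q) : glueE b p ∉ Q := by
  rw [← exO_glue]; exact hex

lemma basediff_t (p : Pos) : tileVerts p \ ({p, (p.1, p.2 + 1)} : Finset Pos) =
    ({(p.1 + 1, p.2), (p.1 + 1, p.2 + 1)} : Finset Pos) := by
  rw [tileVerts_eq]
  ext ⟨x, y⟩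
  simp only [Finset.mem_sdiff, Finset.mem_insert, Finset.mem_singleton, Prod.ext_iff]
  omega

lemma basediff_f (p : Pos) : tileVerts p \ ({p, (p.1 + 1, p.2)} : Finset Pos) =
    ({(p.1, p.2 + 1), (p.1 + 1, p.2 + 1)} : Finset Pos) := by
  rw [tileVerts_eq]
  ext ⟨x, y⟩
  simp only [Finset.mem_sdiff, Finset.mem_insert, Finset.mem_singleton, Prod.ext_iff]
  omega

lemma corner_B {g : List Bool} (p : Pos) : (p.1 + 1, p.2) ∈ Vg g p :=
  mem_Vg_of_tile (by rw [tileVerts_eq]; simp)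

lemma corner_C {g : List Bool} (p : Pos) : (p.1, p.2 + 1) ∈ Vg g p :=
  mem_Vg_of_tile (by rw [tileVerts_eq]; simp)

lemma corner_A {g : List Bool} (p : Pos) : p ∈ Vg g p :=
  mem_Vg_of_tile (by rw [tileVerts_eq]; simp)

/-! ### Base cases -/

lemma baseO (p : Pos) (s : Bool) :
    ProbO [] p s (mO [] p s) ∧ ∀ P, ProbO [] p s P → P = mO [] p s := by
  have hEB : Bg [] p = tileEdges p := Bg_nil p
  have hVB : Vg [] p = tileVerts p := Vg_nil p
  cases s
  · -- s = false : {eL p, eR p}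
    have hm : mO [] p false = {eL p, eR p} := rfl
    constructor
    · refine ⟨?_, ?_, ?_⟩
      · rw [hm, hEB]
        intro e he
        rcases Finset.mem_insert.1 he with h | h
        · exact h ▸ eL_mem_tile p
        · rw [Finset.mem_singleton] at h
          exact h ▸ eR_mem_tile p
      · rw [hm]
        simp [exO, eB, eL, eR, Prod.ext_iff]
      · rw [hm, hVB, ← eLR_union]
        refine Cov_pair ?_
        rw [edgeVerts_eL, edgeVerts_eR]
        rintro ⟨x, y⟩ h1 h2
        simp only [Finset.mem_insert, Finset.mem_singleton, Prod.ext_iff] at h1 h2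
        omega
    · rintro P ⟨hPb, hPex, hPcov⟩
      rw [hEB] at hPb
      have hPE : P ⊆ Eg [] p := by rw [Eg_nil]; exact hPb
      rw [hVB] at hPcov
      have hB : eB p ∉ P := by simpa [exO] using hPex
      have heL : eL p ∈ P := forced_eL hPcov hPE (by rw [tileVerts_eq]; simp) hB
      have heR : eR p ∈ P :=
        forced_eR hPcov hPE (by rw [tileVerts_eq]; simp) hB rttrue_not_Eg_nil
      rw [hm]
      apply Finset.Subset.antisymm
      · intro e heP
        rcases mem_tileEdges.1 (hPb heP) with h | h | h | h
        · exact absurd (h ▸ heP) hB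
        · simp [h]
        · simp [h]
        · exfalso
          have hCv : (p.1, p.2 + 1) ∈ tileVerts p := by rw [tileVerts_eq]; simp
          have : e = eL p := by
            refine Cov_unique hPcov hCv heP heL ?_ ?_
            · rw [h, edgeVerts_eT]; simp
            · rw [edgeVerts_eL]; simp
          rw [this] at h
          simp only [eL, eT, Prod.ext_iff] at h
          omega
      · intro e he
        rcases Finset.mem_insert.1 he with h | h
        · exact h ▸ heL
        · rw [Finset.mem_singleton] at h
          exact h ▸ heR
  · -- s = true : {eB p, eT p}
    have hm : mO [] p true = {eB p, eT p} := rfl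
    constructor
    · refine ⟨?_, ?_, ?_⟩
      · rw [hm, hEB]
        intro e he
        rcases Finset.mem_insert.1 he with h | h
        · exact h ▸ eB_mem_tile p
        · rw [Finset.mem_singleton] at h
          exact h ▸ eT_mem_tile p
      · rw [hm]
        simp [exO, eB, eL, eT, Prod.ext_iff]
      · rw [hm, hVB, ← eBT_union]
        refine Cov_pair ?_
        rw [edgeVerts_eB, edgeVerts_eT]
        rintro ⟨x, y⟩ h1 h2
        simp only [Finset.mem_insert, Finset.mem_singleton, Prod.ext_iff] at h1 h2
        omega
    · rintro P ⟨hPb, hPex, hPcov⟩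
      rw [hEB] at hPb
      have hPE : P ⊆ Eg [] p := by rw [Eg_nil]; exact hPb
      rw [hVB] at hPcov
      have hL : eL p ∉ P := by simpa [exO] using hPex
      have heB : eB p ∈ P := forced_eB hPcov hPE (by rw [tileVerts_eq]; simp) hL
      have heT : eT p ∈ P :=
        forced_eT hPcov hPE (by rw [tileVerts_eq]; simp) hL upfalse_not_Eg_nil
      rw [hm]
      apply Finset.Subset.antisymm
      · intro e heP
        rcases mem_tileEdges.1 (hPb heP) with h | h | h | h
        · simp [h]
        · exact absurd (h ▸ heP) hL
        · exfalso
          have hBv : (p.1 + 1, p.2) ∈ tileVerts p := by rw [tileVerts_eq]; simp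
          have : e = eB p := by
            refine Cov_unique hPcov hBv heP heB ?_ ?_
            · rw [h, edgeVerts_eR]; simp
            · rw [edgeVerts_eB]; simp
          rw [this] at h
          simp [eB, eR, Prod.ext_iff] at h
        · simp [h]
      · intro e he
        rcases Finset.mem_insert.1 he with h | h
        · exact h ▸ heB
        · rw [Finset.mem_singleton] at h
          exact h ▸ heT

lemma baseC (p : Pos) (s : Bool) :
    ProbC [] p s (mC [] p s) ∧ ∀ P, ProbC [] p s P → P = mC [] p s := by
  have hEB : Bg [] p = tileEdges p := Bg_nil p
  have hVB : Vg [] p = tileVerts p := Vg_nil p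
  cases s
  · -- s = false : {eT p}, X = {p, B}
    have hm : mC [] p false = {eT p} := rfl
    have hW : Vg [] p \ XC false p = edgeVerts (eT p) := by
      rw [hVB, XC_f, basediff_f, edgeVerts_eT]
    constructor
    · refine ⟨?_, ?_⟩
      · rw [hm, hEB]
        intro e he
        rw [Finset.mem_singleton] at he
        exact he ▸ eT_mem_tile p
      · rw [hm, hW]
        exact Cov_single (eT p)
    · rintro P ⟨hPb, hPcov⟩
      rw [hEB] at hPb
      have hPE : P ⊆ Eg [] p := by rw [Eg_nil]; exact hPb
      rw [hW] at hPcov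
      have hA : ∀ e ∈ P, p ∉ edgeVerts e := by
        intro e heP hv
        have := hPcov.1 e heP p hv
        rw [edgeVerts_eT] at this
        simp only [Finset.mem_insert, Finset.mem_singleton, Prod.ext_iff] at this
        omega
      have hL : eL p ∉ P := fun h => hA _ h (by rw [edgeVerts_eL]; simp)
      have heT : eT p ∈ P :=
        forced_eT hPcov hPE (by rw [edgeVerts_eT]; simp) hL upfalse_not_Eg_nil
      rw [hm]
      apply Finset.Subset.antisymm
      · intro e heP
        rcases mem_tileEdges.1 (hPb heP) with h | h | h | h
        · exact absurd (hA _ heP) (by rw [h, edgeVerts_eB]; simp)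
        · exact absurd (h ▸ heP) hL
        · exfalso
          have := hPcov.1 e heP (p.1 + 1, p.2) (by rw [h, edgeVerts_eR]; simp)
          rw [edgeVerts_eT] at this
          simp only [Finset.mem_insert, Finset.mem_singleton, Prod.ext_iff] at this
          omega
        · simp [h]
      · intro e he
        rw [Finset.mem_singleton] at he
        exact he ▸ heT
  · -- s = true : {eR p}, X = {p, C}
    have hm : mC [] p true = {eR p} := rfl
    have hW : Vg [] p \ XC true p = edgeVerts (eR p) := by
      rw [hVB, XC_t, basediff_t, edgeVerts_eR]
    constructor
    · refine ⟨?_, ?_⟩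
      · rw [hm, hEB]
        intro e he
        rw [Finset.mem_singleton] at he
        exact he ▸ eR_mem_tile p
      · rw [hm, hW]
        exact Cov_single (eR p)
    · rintro P ⟨hPb, hPcov⟩
      rw [hEB] at hPb
      have hPE : P ⊆ Eg [] p := by rw [Eg_nil]; exact hPb
      rw [hW] at hPcov
      have hA : ∀ e ∈ P, p ∉ edgeVerts e := by
        intro e heP hv
        have := hPcov.1 e heP p hv
        rw [edgeVerts_eR] at this
        simp only [Finset.mem_insert, Finset.mem_singleton, Prod.ext_iff] at this
        omega
      have hB : eB p ∉ P := fun h => hA _ h (by rw [edgeVerts_eB]; simp)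
      have heR : eR p ∈ P :=
        forced_eR hPcov hPE (by rw [edgeVerts_eR]; simp) hB rttrue_not_Eg_nil
      rw [hm]
      apply Finset.Subset.antisymm
      · intro e heP
        rcases mem_tileEdges.1 (hPb heP) with h | h | h | h
        · exact absurd (h ▸ heP) hB
        · exact absurd (hA _ heP) (by rw [h, edgeVerts_eL]; simp)
        · simp [h]
        · exfalso
          have := hPcov.1 e heP (p.1, p.2 + 1) (by rw [h, edgeVerts_eT]; simp)
          rw [edgeVerts_eR] at this
          simp only [Finset.mem_insert, Finset.mem_singleton, Prod.ext_iff] at this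
          omega
      · intro e he
        rw [Finset.mem_singleton] at he
        exact he ▸ heR



/-! ### Edge distinctness -/

lemma glue_t (p : Pos) : glueE true p = eR p := rfl
lemma glue_f (p : Pos) : glueE false p = eT p := rfl

lemma eB_ne_eR (p : Pos) : eB p ≠ eR p := by simp [eB, eR]
lemma eT_ne_eR (p : Pos) : eT p ≠ eR p := by simp [eT, eR]
lemma eL_ne_eT (p : Pos) : eL p ≠ eT p := by simp [eL, eT]
lemma eR_ne_eT (p : Pos) : eR p ≠ eT p := by simp [eR, eT]

lemma eB_ne_eT (p : Pos) : eB p ≠ eT p := by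
  intro h
  have := congrArg (fun e : SEdge => e.1.2) h
  simp only [eB, eT] at this
  omega

lemma eL_ne_eR (p : Pos) : eL p ≠ eR p := by
  intro h
  have := congrArg (fun e : SEdge => e.1.1) h
  simp only [eL, eR] at this
  omega

lemma vert_A_eB (p : Pos) : p ∈ edgeVerts (eB p) := by rw [edgeVerts_eB]; simp
lemma vert_A_eL (p : Pos) : p ∈ edgeVerts (eL p) := by rw [edgeVerts_eL]; simp
lemma vert_B_eB (p : Pos) : (p.1 + 1, p.2) ∈ edgeVerts (eB p) := by rw [edgeVerts_eB]; simp
lemma vert_B_eR (p : Pos) : (p.1 + 1, p.2) ∈ edgeVerts (eR p) := by rw [edgeVerts_eR]; simp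
lemma vert_C_eL (p : Pos) : (p.1, p.2 + 1) ∈ edgeVerts (eL p) := by rw [edgeVerts_eL]; simp
lemma vert_C_eT (p : Pos) : (p.1, p.2 + 1) ∈ edgeVerts (eT p) := by rw [edgeVerts_eT]; simp

/-! ### The main induction, step cases -/

def IHgood (g : List Bool) : Prop :=
  ∀ p : Pos, (∀ s, ProbO g p s (mO g p s) ∧ ∀ P, ProbO g p s P → P = mO g p s) ∧
    (∀ s, ProbC g p s (mC g p s) ∧ ∀ P, ProbC g p s P → P = mC g p s)

lemma stepO_true_true (g : List Bool) (p : Pos) (ih : IHgood g) :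
    ProbO (true :: g) p true (mO (true :: g) p true) ∧
      ∀ P, ProbO (true :: g) p true P → P = mO (true :: g) p true := by
  have hm : mO (true :: g) p true = {eB p, eT p} ∪ mC g (stepP true p) true := rfl
  obtain ⟨hsub1, hcov1⟩ := ((ih (stepP true p)).2 true).1
  have hP0 : ∀ e ∈ ({eB p, eT p} : Finset SEdge), e ∈ tileEdges p ∧ e ≠ glueE true p := by
    intro e he
    rcases Finset.mem_insert.1 he with h | h
    · exact h ▸ ⟨eB_mem_tile p, by rw [glue_t]; exact eB_ne_eR p⟩
    · rw [Finset.mem_singleton] at h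
      exact h ▸ ⟨eT_mem_tile p, by rw [glue_t]; exact eT_ne_eR p⟩
  have hCov0 : Cov (tileVerts p) ({eB p, eT p} : Finset SEdge) := by
    rw [← eBT_union]
    refine Cov_pair ?_
    rintro ⟨x, y⟩ h1 h2
    rw [edgeVerts_eB] at h1
    rw [edgeVerts_eT] at h2
    simp only [Finset.mem_insert, Finset.mem_singleton, Prod.ext_iff] at h1 h2
    omega
  have hglue1 : glueE true p ∉ mC g (stepP true p) true := glue_not_in_subC hcov1
  constructor
  · obtain ⟨hb, hc⟩ := glue_step hP0 hCov0 hsub1 hglue1 hcov1 (fun v hv => disj_tile hv)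
    rw [hm]
    refine ⟨hb, ?_, ?_⟩
    · intro hmem
      rcases Finset.mem_union.1 hmem with h | h
      · rcases Finset.mem_insert.1 h with h | h
        · exact absurd h.symm (by simp [exO, eL, eB])
        · rw [Finset.mem_singleton] at h
          exact eL_ne_eT p h
      · exact not_mem_of_vert hcov1 (vert_A_eL p)
          (fun hx => lowx_not_VgT rfl (Finset.mem_sdiff.1 hx).1) h
    · rw [← id1 true g p]
      exact hc
  · rintro P ⟨hPb, hPex, hPcov⟩
    have hPE : P ⊆ Eg (true :: g) p := hPb.trans (Bg_subset_Eg _ _)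
    have hL : eL p ∉ P := hPex
    have heB : eB p ∈ P := forced_eB hPcov hPE (corner_A p) hL
    have heT : eT p ∈ P := forced_eT hPcov hPE (corner_C p) hL upfalse_not_Eg_true
    have hP0sub : ({eB p, eT p} : Finset SEdge) ⊆ P := by
      intro e he
      rcases Finset.mem_insert.1 he with h | h
      · exact h ▸ heB
      · rw [Finset.mem_singleton] at h
        exact h ▸ heT
    have htile : ∀ e ∈ P, e ∈ tileEdges p → e ∈ ({eB p, eT p} : Finset SEdge) := by
      intro e heP het
      rcases mem_tileEdges.1 het with h | h | h | h
      · simp [h]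
      · exact absurd (h ▸ heP) hL
      · exact absurd (hPb heP) (by rw [h, ← glue_t]; exact glue_not_Bg true g p)
      · simp [h]
    obtain ⟨hs1, hs2, hs3, hs4⟩ := split_step hPb hPcov hP0sub hCov0
      (by rw [Vg_cons]; exact Finset.subset_union_left) htile
    rw [id1' true g p] at hs3
    have := ((ih (stepP true p)).2 true).2 _ ⟨hs1, hs3⟩
    rw [hm, ← this]
    exact hs4

lemma stepO_false_true (g : List Bool) (p : Pos) (ih : IHgood g) :
    ProbO (false :: g) p true (mO (false :: g) p true) ∧
      ∀ P, ProbO (false :: g) p true P → P = mO (false :: g) p true := by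
  have hm : mO (false :: g) p true = {eB p} ∪ mO g (stepP false p) false := rfl
  obtain ⟨hsub1, hex1, hcov1⟩ := ((ih (stepP false p)).1 false).1
  have hP0 : ∀ e ∈ ({eB p} : Finset SEdge), e ∈ tileEdges p ∧ e ≠ glueE false p := by
    intro e he
    rw [Finset.mem_singleton] at he
    exact he ▸ ⟨eB_mem_tile p, by rw [glue_f]; exact eB_ne_eT p⟩
  have hglue1 : glueE false p ∉ mO g (stepP false p) false := glue_not_in_subO hex1
  have hdisj0 : ∀ v ∈ edgeVerts (eB p), v ∉ Vg g (stepP false p) := by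
    rintro v hv
    rw [edgeVerts_eB] at hv
    rcases Finset.mem_insert.1 hv with h | h
    · exact lowy_not_VgF (by rw [h])
    · rw [Finset.mem_singleton] at h
      exact lowy_not_VgF (by rw [h])
  constructor
  · obtain ⟨hb, hc⟩ := glue_step hP0 (Cov_single (eB p)) hsub1 hglue1 hcov1 hdisj0
    rw [hm]
    refine ⟨hb, ?_, ?_⟩
    · intro hmem
      rcases Finset.mem_union.1 hmem with h | h
      · rw [Finset.mem_singleton] at h
        exact absurd h.symm (by simp [exO, eL, eB])
      · exact not_mem_of_vert hcov1 (vert_A_eL p) (lowy_not_VgF rfl) h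
    · rw [← id2 g p, ← edgeVerts_eB]
      exact hc
  · rintro P ⟨hPb, hPex, hPcov⟩
    have hPE : P ⊆ Eg (false :: g) p := hPb.trans (Bg_subset_Eg _ _)
    have hL : eL p ∉ P := hPex
    have heB : eB p ∈ P := forced_eB hPcov hPE (corner_A p) hL
    have hP0sub : ({eB p} : Finset SEdge) ⊆ P := by
      intro e he
      rw [Finset.mem_singleton] at he
      exact he ▸ heB
    have htile : ∀ e ∈ P, e ∈ tileEdges p → e ∈ ({eB p} : Finset SEdge) := by
      intro e heP het
      rcases mem_tileEdges.1 het with h | h | h | h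
      · simp [h]
      · exact absurd (h ▸ heP) hL
      · exfalso
        have : e = eB p := Cov_unique hPcov (corner_B p) heP heB
          (by rw [h]; exact vert_B_eR p) (vert_B_eB p)
        rw [this] at h
        exact eB_ne_eR p h
      · exact absurd (hPb heP) (by rw [h, ← glue_f]; exact glue_not_Bg false g p)
    obtain ⟨hs1, hs2, hs3, hs4⟩ := split_step hPb hPcov hP0sub (Cov_single (eB p))
      (fun v hv => mem_Vg_of_tile (eX_tile (eB_mem_tile p) hv)) htile
    rw [edgeVerts_eB, id2'] at hs3
    rw [← exO_glue] at hs2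
    have := ((ih (stepP false p)).1 false).2 _ ⟨hs1, hs2, hs3⟩
    rw [hm, ← this]
    exact hs4

lemma stepO_true_false (g : List Bool) (p : Pos) (ih : IHgood g) :
    ProbO (true :: g) p false (mO (true :: g) p false) ∧
      ∀ P, ProbO (true :: g) p false P → P = mO (true :: g) p false := by
  have hm : mO (true :: g) p false = {eL p} ∪ mO g (stepP true p) true := rfl
  obtain ⟨hsub1, hex1, hcov1⟩ := ((ih (stepP true p)).1 true).1
  have hP0 : ∀ e ∈ ({eL p} : Finset SEdge), e ∈ tileEdges p ∧ e ≠ glueE true p := by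
    intro e he
    rw [Finset.mem_singleton] at he
    exact he ▸ ⟨eL_mem_tile p, by rw [glue_t]; exact eL_ne_eR p⟩
  have hglue1 : glueE true p ∉ mO g (stepP true p) true := glue_not_in_subO hex1
  have hdisj0 : ∀ v ∈ edgeVerts (eL p), v ∉ Vg g (stepP true p) := by
    rintro v hv
    rw [edgeVerts_eL] at hv
    rcases Finset.mem_insert.1 hv with h | h
    · exact lowx_not_VgT (by rw [h])
    · rw [Finset.mem_singleton] at h
      exact lowx_not_VgT (by rw [h])
  constructor
  · obtain ⟨hb, hc⟩ := glue_step hP0 (Cov_single (eL p)) hsub1 hglue1 hcov1 hdisj0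
    rw [hm]
    refine ⟨hb, ?_, ?_⟩
    · intro hmem
      rcases Finset.mem_union.1 hmem with h | h
      · rw [Finset.mem_singleton] at h
        exact absurd h (by simp [exO, eL, eB])
      · exact not_mem_of_vert hcov1 (vert_A_eB p) (lowx_not_VgT rfl) h
    · rw [← id3 g p, ← edgeVerts_eL]
      exact hc
  · rintro P ⟨hPb, hPex, hPcov⟩
    have hPE : P ⊆ Eg (true :: g) p := hPb.trans (Bg_subset_Eg _ _)
    have hB : eB p ∉ P := hPex
    have heL : eL p ∈ P := forced_eL hPcov hPE (corner_A p) hB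
    have hP0sub : ({eL p} : Finset SEdge) ⊆ P := by
      intro e he
      rw [Finset.mem_singleton] at he
      exact he ▸ heL
    have htile : ∀ e ∈ P, e ∈ tileEdges p → e ∈ ({eL p} : Finset SEdge) := by
      intro e heP het
      rcases mem_tileEdges.1 het with h | h | h | h
      · exact absurd (h ▸ heP) hB
      · simp [h]
      · exact absurd (hPb heP) (by rw [h, ← glue_t]; exact glue_not_Bg true g p)
      · exfalso
        have : e = eL p := Cov_unique hPcov (corner_C p) heP heL
          (by rw [h]; exact vert_C_eT p) (vert_C_eL p)
        rw [this] at h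
        exact eL_ne_eT p h
    obtain ⟨hs1, hs2, hs3, hs4⟩ := split_step hPb hPcov hP0sub (Cov_single (eL p))
      (fun v hv => mem_Vg_of_tile (eX_tile (eL_mem_tile p) hv)) htile
    rw [edgeVerts_eL, id3'] at hs3
    rw [← exO_glue] at hs2
    have := ((ih (stepP true p)).1 true).2 _ ⟨hs1, hs2, hs3⟩
    rw [hm, ← this]
    exact hs4

lemma stepO_false_false (g : List Bool) (p : Pos) (ih : IHgood g) :
    ProbO (false :: g) p false (mO (false :: g) p false) ∧
      ∀ P, ProbO (false :: g) p false P → P = mO (false :: g) p false := by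
  have hm : mO (false :: g) p false = {eL p, eR p} ∪ mC g (stepP false p) false := rfl
  obtain ⟨hsub1, hcov1⟩ := ((ih (stepP false p)).2 false).1
  have hP0 : ∀ e ∈ ({eL p, eR p} : Finset SEdge), e ∈ tileEdges p ∧ e ≠ glueE false p := by
    intro e he
    rcases Finset.mem_insert.1 he with h | h
    · exact h ▸ ⟨eL_mem_tile p, by rw [glue_f]; exact eL_ne_eT p⟩
    · rw [Finset.mem_singleton] at h
      exact h ▸ ⟨eR_mem_tile p, by rw [glue_f]; exact eR_ne_eT p⟩
  have hCov0 : Cov (tileVerts p) ({eL p, eR p} : Finset SEdge) := by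
    rw [← eLR_union]
    refine Cov_pair ?_
    rintro ⟨x, y⟩ h1 h2
    rw [edgeVerts_eL] at h1
    rw [edgeVerts_eR] at h2
    simp only [Finset.mem_insert, Finset.mem_singleton, Prod.ext_iff] at h1 h2
    omega
  have hglue1 : glueE false p ∉ mC g (stepP false p) false := glue_not_in_subC hcov1
  constructor
  · obtain ⟨hb, hc⟩ := glue_step hP0 hCov0 hsub1 hglue1 hcov1 (fun v hv => disj_tile hv)
    rw [hm]
    refine ⟨hb, ?_, ?_⟩
    · intro hmem
      rcases Finset.mem_union.1 hmem with h | h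
      · rcases Finset.mem_insert.1 h with h | h
        · exact absurd h (by simp [exO, eL, eB])
        · rw [Finset.mem_singleton] at h
          exact absurd h (by simp [exO, eB, eR])
      · exact not_mem_of_vert hcov1 (vert_A_eB p)
          (fun hx => lowy_not_VgF rfl (Finset.mem_sdiff.1 hx).1) h
    · rw [← id1 false g p]
      exact hc
  · rintro P ⟨hPb, hPex, hPcov⟩
    have hPE : P ⊆ Eg (false :: g) p := hPb.trans (Bg_subset_Eg _ _)
    have hB : eB p ∉ P := hPex
    have heL : eL p ∈ P := forced_eL hPcov hPE (corner_A p) hB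
    have heR : eR p ∈ P := forced_eR hPcov hPE (corner_B p) hB rttrue_not_Eg_false
    have hP0sub : ({eL p, eR p} : Finset SEdge) ⊆ P := by
      intro e he
      rcases Finset.mem_insert.1 he with h | h
      · exact h ▸ heL
      · rw [Finset.mem_singleton] at h
        exact h ▸ heR
    have htile : ∀ e ∈ P, e ∈ tileEdges p → e ∈ ({eL p, eR p} : Finset SEdge) := by
      intro e heP het
      rcases mem_tileEdges.1 het with h | h | h | h
      · exact absurd (h ▸ heP) hB
      · simp [h]
      · simp [h]
      · exact absurd (hPb heP) (by rw [h, ← glue_f]; exact glue_not_Bg false g p)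
    obtain ⟨hs1, hs2, hs3, hs4⟩ := split_step hPb hPcov hP0sub hCov0
      (by rw [Vg_cons]; exact Finset.subset_union_left) htile
    rw [id1' false g p] at hs3
    have := ((ih (stepP false p)).2 false).2 _ ⟨hs1, hs3⟩
    rw [hm, ← this]
    exact hs4

lemma stepC_true_true (g : List Bool) (p : Pos) (ih : IHgood g) :
    ProbC (true :: g) p true (mC (true :: g) p true) ∧
      ∀ P, ProbC (true :: g) p true P → P = mC (true :: g) p true := by
  have hm : mC (true :: g) p true = mO g (stepP true p) true := rfl
  obtain ⟨hsub1, hex1, hcov1⟩ := ((ih (stepP true p)).1 true).1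
  have hglue1 : glueE true p ∉ mO g (stepP true p) true := glue_not_in_subO hex1
  constructor
  · rw [hm]
    refine ⟨?_, ?_⟩
    · intro e he
      have hBs := hsub1 he
      exact (Bg_sub_iff (Bg_subset_Eg _ _ hBs)).2 ⟨hBs, fun h => hglue1 (h ▸ he)⟩
    · rw [XC_t, id3']
      exact hcov1
  · rintro P ⟨hPb, hPcov⟩
    have hA : ∀ e ∈ P, p ∉ edgeVerts e := by
      intro e heP hv
      exact (Finset.mem_sdiff.1 (hPcov.1 e heP p hv)).2 (XC_base true p)
    have hC : ∀ e ∈ P, (p.1, p.2 + 1) ∉ edgeVerts e := by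
      intro e heP hv
      refine (Finset.mem_sdiff.1 (hPcov.1 e heP _ hv)).2 ?_
      rw [XC_t]
      simp
    have hsub' : P ⊆ Bg g (stepP true p) := by
      intro e heP
      rcases mem_Bg_cases (hPb heP) with ht | ht
      · exfalso
        rcases mem_tileEdges.1 ht with h | h | h | h
        · exact hA e heP (h ▸ vert_A_eB p)
        · exact hA e heP (h ▸ vert_A_eL p)
        · exact glue_not_Bg true g p (by rw [glue_t, ← h]; exact hPb heP)
        · exact hC e heP (h ▸ vert_C_eT p)
      · exact ((Bg_sub_iff ht).1 (hPb heP)).1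
    have hex' : exO true (stepP true p) ∉ P := by
      rw [exO_glue]
      exact fun h => glue_not_Bg true g p (hPb h)
    have hcov' : Cov (Vg g (stepP true p)) P := by
      rw [XC_t, id3'] at hPcov
      exact hPcov
    exact ((ih (stepP true p)).1 true).2 _ ⟨hsub', hex', hcov'⟩

lemma stepC_false_false (g : List Bool) (p : Pos) (ih : IHgood g) :
    ProbC (false :: g) p false (mC (false :: g) p false) ∧
      ∀ P, ProbC (false :: g) p false P → P = mC (false :: g) p false := by
  have hm : mC (false :: g) p false = mO g (stepP false p) false := rfl
  obtain ⟨hsub1, hex1, hcov1⟩ := ((ih (stepP false p)).1 false).1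
  have hglue1 : glueE false p ∉ mO g (stepP false p) false := glue_not_in_subO hex1
  constructor
  · rw [hm]
    refine ⟨?_, ?_⟩
    · intro e he
      have hBs := hsub1 he
      exact (Bg_sub_iff (Bg_subset_Eg _ _ hBs)).2 ⟨hBs, fun h => hglue1 (h ▸ he)⟩
    · rw [XC_f, id2']
      exact hcov1
  · rintro P ⟨hPb, hPcov⟩
    have hA : ∀ e ∈ P, p ∉ edgeVerts e := by
      intro e heP hv
      exact (Finset.mem_sdiff.1 (hPcov.1 e heP p hv)).2 (XC_base false p)
    have hB : ∀ e ∈ P, (p.1 + 1, p.2) ∉ edgeVerts e := by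
      intro e heP hv
      refine (Finset.mem_sdiff.1 (hPcov.1 e heP _ hv)).2 ?_
      rw [XC_f]
      simp
    have hsub' : P ⊆ Bg g (stepP false p) := by
      intro e heP
      rcases mem_Bg_cases (hPb heP) with ht | ht
      · exfalso
        rcases mem_tileEdges.1 ht with h | h | h | h
        · exact hA e heP (h ▸ vert_A_eB p)
        · exact hA e heP (h ▸ vert_A_eL p)
        · exact hB e heP (h ▸ vert_B_eR p)
        · exact glue_not_Bg false g p (by rw [glue_f, ← h]; exact hPb heP)
      · exact ((Bg_sub_iff ht).1 (hPb heP)).1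
    have hex' : exO false (stepP false p) ∉ P := by
      rw [exO_glue]
      exact fun h => glue_not_Bg false g p (hPb h)
    have hcov' : Cov (Vg g (stepP false p)) P := by
      rw [XC_f, id2'] at hPcov
      exact hPcov
    exact ((ih (stepP false p)).1 false).2 _ ⟨hsub', hex', hcov'⟩

lemma stepC_false_true (g : List Bool) (p : Pos) (ih : IHgood g) :
    ProbC (false :: g) p true (mC (false :: g) p true) ∧
      ∀ P, ProbC (false :: g) p true P → P = mC (false :: g) p true := by
  have hm : mC (false :: g) p true = {eR p} ∪ mC g (stepP false p) false := rfl
  obtain ⟨hsub1, hcov1⟩ := ((ih (stepP false p)).2 false).1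
  have hP0 : ∀ e ∈ ({eR p} : Finset SEdge), e ∈ tileEdges p ∧ e ≠ glueE false p := by
    intro e he
    rw [Finset.mem_singleton] at he
    exact he ▸ ⟨eR_mem_tile p, by rw [glue_f]; exact eR_ne_eT p⟩
  have hglue1 : glueE false p ∉ mC g (stepP false p) false := glue_not_in_subC hcov1
  constructor
  · obtain ⟨hb, hc⟩ := glue_step hP0 (Cov_single (eR p)) hsub1 hglue1 hcov1
      (fun v hv => disj_tile (eX_tile (eR_mem_tile p) hv))
    rw [hm]
    refine ⟨hb, ?_⟩
    rw [XC_t, id6 g p]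
    rw [XC_glue_f, edgeVerts_eR] at hc
    exact hc
  · rintro P ⟨hPb, hPcov⟩
    have hPE : P ⊆ Eg (false :: g) p := hPb.trans (Bg_subset_Eg _ _)
    have hA : ∀ e ∈ P, p ∉ edgeVerts e := by
      intro e heP hv
      exact (Finset.mem_sdiff.1 (hPcov.1 e heP p hv)).2 (XC_base true p)
    have hB : eB p ∉ P := fun h => hA _ h (vert_A_eB p)
    have hBW : (p.1 + 1, p.2) ∈ Vg (false :: g) p \ XC true p := by
      refine Finset.mem_sdiff.2 ⟨corner_B p, ?_⟩
      rw [XC_t]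
      simp only [Finset.mem_insert, Finset.mem_singleton, Prod.ext_iff]
      omega
    have heR : eR p ∈ P := forced_eR hPcov hPE hBW hB rttrue_not_Eg_false
    have hP0sub : ({eR p} : Finset SEdge) ⊆ P := by
      intro e he
      rw [Finset.mem_singleton] at he
      exact he ▸ heR
    have hW0 : edgeVerts (eR p) ⊆ Vg (false :: g) p \ XC true p := by
      intro v hv
      rw [edgeVerts_eR] at hv
      refine Finset.mem_sdiff.2 ⟨?_, ?_⟩
      · rcases Finset.mem_insert.1 hv with h | h
        · exact h ▸ corner_B p
        · rw [Finset.mem_singleton] at h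
          exact h ▸ mem_Vg_of_tile (by rw [tileVerts_eq]; simp)
      · rw [XC_t]
        rcases Finset.mem_insert.1 hv with h | h
        · rw [h]
          simp only [Finset.mem_insert, Finset.mem_singleton, Prod.ext_iff]
          omega
        · rw [Finset.mem_singleton] at h
          rw [h]
          simp only [Finset.mem_insert, Finset.mem_singleton, Prod.ext_iff]
          omega
    have htile : ∀ e ∈ P, e ∈ tileEdges p → e ∈ ({eR p} : Finset SEdge) := by
      intro e heP het
      rcases mem_tileEdges.1 het with h | h | h | h
      · exact absurd (h ▸ heP) hB
      · exact absurd (hA e heP) (by rw [h]; exact fun hc => hc (vert_A_eL p))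
      · simp [h]
      · exact absurd (hPb heP) (by rw [h, ← glue_f]; exact glue_not_Bg false g p)
    obtain ⟨hs1, hs2, hs3, hs4⟩ := split_step hPb hPcov hP0sub (Cov_single (eR p)) hW0 htile
    rw [XC_t, edgeVerts_eR, id6', ← XC_glue_f] at hs3
    have := ((ih (stepP false p)).2 false).2 _ ⟨hs1, hs3⟩
    rw [hm, ← this]
    exact hs4

lemma stepC_true_false (g : List Bool) (p : Pos) (ih : IHgood g) :
    ProbC (true :: g) p false (mC (true :: g) p false) ∧
      ∀ P, ProbC (true :: g) p false P → P = mC (true :: g) p false := by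
  have hm : mC (true :: g) p false = {eT p} ∪ mC g (stepP true p) true := rfl
  obtain ⟨hsub1, hcov1⟩ := ((ih (stepP true p)).2 true).1
  have hP0 : ∀ e ∈ ({eT p} : Finset SEdge), e ∈ tileEdges p ∧ e ≠ glueE true p := by
    intro e he
    rw [Finset.mem_singleton] at he
    exact he ▸ ⟨eT_mem_tile p, by rw [glue_t]; exact eT_ne_eR p⟩
  have hglue1 : glueE true p ∉ mC g (stepP true p) true := glue_not_in_subC hcov1
  constructor
  · obtain ⟨hb, hc⟩ := glue_step hP0 (Cov_single (eT p)) hsub1 hglue1 hcov1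
      (fun v hv => disj_tile (eX_tile (eT_mem_tile p) hv))
    rw [hm]
    refine ⟨hb, ?_⟩
    rw [XC_f, id7 g p]
    rw [XC_glue_t, edgeVerts_eT] at hc
    exact hc
  · rintro P ⟨hPb, hPcov⟩
    have hPE : P ⊆ Eg (true :: g) p := hPb.trans (Bg_subset_Eg _ _)
    have hA : ∀ e ∈ P, p ∉ edgeVerts e := by
      intro e heP hv
      exact (Finset.mem_sdiff.1 (hPcov.1 e heP p hv)).2 (XC_base false p)
    have hL : eL p ∉ P := fun h => hA _ h (vert_A_eL p)
    have hCW : (p.1, p.2 + 1) ∈ Vg (true :: g) p \ XC false p := by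
      refine Finset.mem_sdiff.2 ⟨corner_C p, ?_⟩
      rw [XC_f]
      simp only [Finset.mem_insert, Finset.mem_singleton, Prod.ext_iff]
      omega
    have heT : eT p ∈ P := forced_eT hPcov hPE hCW hL upfalse_not_Eg_true
    have hP0sub : ({eT p} : Finset SEdge) ⊆ P := by
      intro e he
      rw [Finset.mem_singleton] at he
      exact he ▸ heT
    have hW0 : edgeVerts (eT p) ⊆ Vg (true :: g) p \ XC false p := by
      intro v hv
      rw [edgeVerts_eT] at hv
      refine Finset.mem_sdiff.2 ⟨?_, ?_⟩
      · rcases Finset.mem_insert.1 hv with h | h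
        · exact h ▸ corner_C p
        · rw [Finset.mem_singleton] at h
          exact h ▸ mem_Vg_of_tile (by rw [tileVerts_eq]; simp)
      · rw [XC_f]
        rcases Finset.mem_insert.1 hv with h | h
        · rw [h]
          simp only [Finset.mem_insert, Finset.mem_singleton, Prod.ext_iff]
          omega
        · rw [Finset.mem_singleton] at h
          rw [h]
          simp only [Finset.mem_insert, Finset.mem_singleton, Prod.ext_iff]
          omega
    have hBX : ∀ e ∈ P, (p.1 + 1, p.2) ∉ edgeVerts e := by
      intro e heP hv
      refine (Finset.mem_sdiff.1 (hPcov.1 e heP _ hv)).2 ?_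
      rw [XC_f]
      simp
    have htile : ∀ e ∈ P, e ∈ tileEdges p → e ∈ ({eT p} : Finset SEdge) := by
      intro e heP het
      rcases mem_tileEdges.1 het with h | h | h | h
      · exact absurd (hA e heP) (by rw [h]; exact fun hc => hc (vert_A_eB p))
      · exact absurd (h ▸ heP) hL
      · exact absurd (hBX e heP) (by rw [h]; exact fun hc => hc (vert_B_eR p))
      · simp [h]
    obtain ⟨hs1, hs2, hs3, hs4⟩ := split_step hPb hPcov hP0sub (Cov_single (eT p)) hW0 htile
    rw [XC_f, edgeVerts_eT, id7', ← XC_glue_t] at hs3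
    have := ((ih (stepP true p)).2 true).2 _ ⟨hs1, hs3⟩
    rw [hm, ← this]
    exact hs4

theorem mainInduction : ∀ g : List Bool, IHgood g := by
  intro g
  induction g with
  | nil => exact fun p => ⟨fun s => baseO p s, fun s => baseC p s⟩
  | cons b g ih =>
    intro p
    cases b
    · refine ⟨fun s => ?_, fun s => ?_⟩
      · cases s
        · exact stepO_false_false g p ih
        · exact stepO_false_true g p ih
      · cases s
        · exact stepC_false_false g p ih
        · exact stepC_false_true g p ih
    · refine ⟨fun s => ?_, fun s => ?_⟩
      · cases s
        · exact stepO_true_false g p ih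
        · exact stepO_true_true g p ih
      · cases s
        · exact stepC_true_false g p ih
        · exact stepC_true_true g p ih



lemma eB_mem_mO (g : List Bool) (p : Pos) : eB p ∈ mO g p true := by
  cases g with
  | nil => simp [mO]
  | cons b g => cases b <;> simp [mO]

theorem two_matchings (g : List Bool) :
    {P : Finset SEdge | IsPM (snakeEdges g) P ∧ P ⊆ boundary g} =
      {mO g ((0 : ℤ), (0 : ℤ)) true, mO g ((0 : ℤ), (0 : ℤ)) false} ∧
      mO g ((0 : ℤ), (0 : ℤ)) true ≠ mO g ((0 : ℤ), (0 : ℤ)) false := by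
  have hmain := mainInduction g
  obtain ⟨hA, hAu⟩ := (hmain ((0 : ℤ), (0 : ℤ))).1 true
  obtain ⟨hB, hBu⟩ := (hmain ((0 : ℤ), (0 : ℤ))).1 false
  constructor
  · ext P
    simp only [Set.mem_setOf_eq, Set.mem_insert_iff, Set.mem_singleton_iff]
    constructor
    · rintro ⟨⟨hPsub, hPcover⟩, hPbd⟩
      have hPb : P ⊆ Bg g ((0 : ℤ), (0 : ℤ)) := hPbd
      have hPE : P ⊆ Eg g ((0 : ℤ), (0 : ℤ)) := hPsub
      have hCov : Cov (Vg g ((0 : ℤ), (0 : ℤ))) P := by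
        refine ⟨?_, hPcover⟩
        intro e he v hv
        exact mem_Vg.2 ⟨e, hPE he, hv⟩
      obtain ⟨e, ⟨heP, hev⟩, -⟩ := hCov.2 _ (corner_A ((0 : ℤ), (0 : ℤ)))
      have hcand : e = eB ((0 : ℤ), (0 : ℤ)) ∨ e = eL ((0 : ℤ), (0 : ℤ)) := by
        obtain ⟨⟨x, y⟩, bb⟩ := e
        have hbase := mem_Eg_base (hPE heP)
        simp only at hbase
        rcases bb
        · right
          have hxy : x = 0 ∧ y = 0 := by
            rcases mem_edgeVerts.1 hev with h | h <;> simp [Prod.ext_iff] at h <;> omega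
          simp [eL, Prod.ext_iff]
          omega
        · left
          have hxy : x = 0 ∧ y = 0 := by
            rcases mem_edgeVerts.1 hev with h | h <;> simp [Prod.ext_iff] at h <;> omega
          simp [eB, Prod.ext_iff]
          omega
      rcases hcand with h | h
      · left
        apply hAu
        refine ⟨hPb, ?_, hCov⟩
        intro hL
        have heq := Cov_unique hCov (corner_A ((0 : ℤ), (0 : ℤ))) hL (h ▸ heP)
          (vert_A_eL ((0 : ℤ), (0 : ℤ))) (vert_A_eB ((0 : ℤ), (0 : ℤ)))
        exact absurd heq (by simp [exO, eL, eB])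
      · right
        apply hBu
        refine ⟨hPb, ?_, hCov⟩
        intro hBm
        have heq := Cov_unique hCov (corner_A ((0 : ℤ), (0 : ℤ))) hBm (h ▸ heP)
          (vert_A_eB ((0 : ℤ), (0 : ℤ))) (vert_A_eL ((0 : ℤ), (0 : ℤ)))
        exact absurd heq (by simp [exO, eL, eB])
    · rintro (h | h) <;> subst h
      · obtain ⟨hb, hex, hcov⟩ := hA
        exact ⟨⟨hb.trans (Bg_subset_Eg _ _), hcov.2⟩, hb⟩
      · obtain ⟨hb, hex, hcov⟩ := hB
        exact ⟨⟨hb.trans (Bg_subset_Eg _ _), hcov.2⟩, hb⟩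
  · intro h
    have h1 : eB ((0 : ℤ), (0 : ℤ)) ∈ mO g ((0 : ℤ), (0 : ℤ)) true := eB_mem_mO g _
    rw [h] at h1
    exact hB.2.1 h1


end SnakeAux

/-- Every snake graph admits at least two perfect matchings consisting entirely of
boundary edges, and these are the only perfect matchings consisting entirely of
boundary edges: there are exactly two such matchings. -/
theorem exactly_two_boundary_matchings (g : List Bool) :
    2 ≤ {P : Finset SEdge | IsPM (snakeEdges g) P ∧ P ⊆ boundary g}.ncard ∧
    {P : Finset SEdge | IsPM (snakeEdges g) P ∧ P ⊆ boundary g}.ncard = 2 := by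
  obtain ⟨hset, hne⟩ := SnakeAux.two_matchings g
  rw [hset, Set.ncard_pair hne]
  exact ⟨le_refl 2, rfl⟩
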